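/- (Second theorem on passing ε-δ in a chain.) Let κ₁ be a Markov kernel from M to Ω₁, κ₂ a Markov kernel from Ω₁ to Ω₂, P ∈ M, X₂ ⊆ Ω₂ measurable, and m a measure on M. Let X_1, …, X_n be a finite measurable partition of Ω₁ with κ₁(P)(X_i) > 0 for all i, and let X_a satisfy κ₁(P)(X_a) ≤ κ₁(P)(X_i) for all i. Suppose α > 0 and for every i the conditional probability ℙ(F₂∘F₁(P) ∈ X₂ | F₁(P) ∈ X_i) = (∫_{X_i} κ₂(x)(X₂) d(κ₁(P))(x)) / κ₁(P)(X_i) is > α. Suppose further that P is (ε₀, δ₀)-accountable for X_a under κ₁ (so κ₁(P)(X_a) > ε₀ ≥ 0). Then (κ₂ ∘ κ₁)(P)(X₂) > n · ε₀ · α, and for any δ > m({a ∈ M : a ≠ P and (κ₂ ∘ κ₁)(a)(X₂) > n·ε₀·α}), P is (n·ε₀·α, δ)-accountable for X₂ under κ₂ ∘ κ₁. -/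

import Mathlib

open MeasureTheory ProbabilityTheory
open scoped ENNReal

set_option maxHeartbeats 1000000 in
/-- Second theorem on passing ε-δ in a chain: with a finite measurable partition
of `Ω₁` of everywhere positive `κ₁ P`-mass, `X a` of minimal mass, conditional probabilities all
`> α > 0`, and `P` `(ε₀, δ₀)`-accountable for `X a` under `κ₁`, we get
`(κ₂ ∘ₖ κ₁) P X₂ > n * ε₀ * α`, and for any `δ` exceeding the mass of the rival set at level
`n * ε₀ * α`, `P` is `(n·ε₀·α, δ)`-accountable for `X₂` under `κ₂ ∘ₖ κ₁`. -/
theorem chain_accountability_second {M Ω₁ Ω₂ : Type*}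
    [MeasurableSpace M] [MeasurableSpace Ω₁] [MeasurableSpace Ω₂]
    (κ₁ : Kernel M Ω₁) [IsMarkovKernel κ₁] (κ₂ : Kernel Ω₁ Ω₂) [IsMarkovKernel κ₂]
    (P : M) (X₂ : Set Ω₂) (hX₂ : MeasurableSet X₂) (m : Measure M)
    (n : ℕ) (X : Fin n → Set Ω₁) (hXmeas : ∀ i, MeasurableSet (X i))
    (hXdisj : Pairwise (Function.onFun Disjoint X)) (hXcover : ⋃ i, X i = Set.univ)
    (hXpos : ∀ i, 0 < κ₁ P (X i))
    (a : Fin n) (ha : ∀ i, κ₁ P (X a) ≤ κ₁ P (X i))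
    (α : ℝ≥0∞) (hαpos : 0 < α)
    (hα : ∀ i, α < (∫⁻ x in X i, κ₂ x X₂ ∂(κ₁ P)) / κ₁ P (X i))
    (ε₀ δ₀ : ℝ≥0∞)
    (hacc : ε₀ < κ₁ P (X a) ∧ m {b : M | b ≠ P ∧ ε₀ < κ₁ b (X a)} < δ₀) :
    n * ε₀ * α < (κ₂ ∘ₖ κ₁) P X₂ ∧
      ∀ δ : ℝ≥0∞, m {b : M | b ≠ P ∧ n * ε₀ * α < (κ₂ ∘ₖ κ₁) b X₂} < δ →
        n * ε₀ * α < (κ₂ ∘ₖ κ₁) P X₂ ∧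
          m {b : M | b ≠ P ∧ n * ε₀ * α < (κ₂ ∘ₖ κ₁) b X₂} < δ := by
  have key : n * ε₀ * α < (κ₂ ∘ₖ κ₁) P X₂ := by
    have hIle : ∀ i, (∫⁻ x in X i, κ₂ x X₂ ∂(κ₁ P)) ≤ κ₁ P (X i) := fun i => by
      calc (∫⁻ x in X i, κ₂ x X₂ ∂(κ₁ P)) ≤ ∫⁻ _ in X i, 1 ∂(κ₁ P) :=
            lintegral_mono fun x => prob_le_one
        _ = κ₁ P (X i) := by simp
    have hμfin : ∀ i, κ₁ P (X i) ≠ ⊤ := fun i => measure_ne_top _ _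
    have hαtop : α ≠ ⊤ := by
      have hdiv : (∫⁻ x in X a, κ₂ x X₂ ∂(κ₁ P)) / κ₁ P (X a) < ⊤ :=
        ENNReal.div_lt_top (ne_top_of_le_ne_top (hμfin a) (hIle a)) (hXpos a).ne'
      exact ne_top_of_lt (lt_trans (hα a) hdiv)
    have hkey : ∀ i, ε₀ * α < ∫⁻ x in X i, κ₂ x X₂ ∂(κ₁ P) := by
      intro i
      have h1 : α * κ₁ P (X i) < ∫⁻ x in X i, κ₂ x X₂ ∂(κ₁ P) :=
        (ENNReal.lt_div_iff_mul_lt (Or.inl (hXpos i).ne') (Or.inl (hμfin i))).mp (hα i)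
      calc ε₀ * α < κ₁ P (X a) * α :=
            by rw [mul_comm ε₀, mul_comm _ α]; exact ENNReal.mul_lt_mul_right hαpos.ne' hαtop hacc.1
        _ ≤ κ₁ P (X i) * α := mul_le_mul_left (ha i) α
        _ = α * κ₁ P (X i) := mul_comm _ _
        _ < _ := h1
    have hsum : (κ₂ ∘ₖ κ₁) P X₂ = ∑ i, ∫⁻ x in X i, κ₂ x X₂ ∂(κ₁ P) := by
      rw [Kernel.comp_apply' _ _ _ hX₂, ← setLIntegral_univ, ← hXcover,
        lintegral_iUnion hXmeas hXdisj, tsum_fintype]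
    rw [hsum]
    have hne : (Finset.univ : Finset (Fin n)).Nonempty := ⟨a, Finset.mem_univ a⟩
    calc (n : ℝ≥0∞) * ε₀ * α = ∑ _i : Fin n, ε₀ * α := by
          simp [Finset.sum_const, mul_assoc]
      _ < ∑ i, ∫⁻ x in X i, κ₂ x X₂ ∂(κ₁ P) := by
          exact ENNReal.sum_lt_sum_of_nonempty hne fun i _ => hkey i
  exact ⟨key, fun δ hδ => ⟨key, hδ⟩⟩
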